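/- Let Y be an n×n real matrix of the form Y₀ = Z₀ B₀ Z₀ᵀ with Z₀ ∈ ℝ^{n×k}, and let Yin be a symmetric n×n real matrix. For any Z ∈ ℝ^{n×k} and symmetric B ∈ ℝ^{k×k}, with f(Z; B, Y) := ⟨Z B Zᵀ, Y⟩ − (1/2)‖Z B Zᵀ‖_F², we have ‖Z B Zᵀ − Y₀‖_F² ≤ 8k·‖Yin − Y₀‖² + 4·(f(Z₀; B₀, Yin) − f(Z; B, Yin)), where ‖·‖ is the spectral norm. -/

import Mathlib

open Matrix

/-- Frobenius norm squared of a real matrix. -/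
noncomputable def frobSq {n m : ℕ} (A : Matrix (Fin n) (Fin m) ℝ) : ℝ :=
  ∑ i, ∑ j, (A i j) ^ 2

/-- Trace inner product on square real matrices. -/
noncomputable def mip {n : ℕ} (A B : Matrix (Fin n) (Fin n) ℝ) : ℝ :=
  Matrix.trace (A * Bᵀ)

/-- Spectral norm (ℓ²→ℓ² operator norm) of a real square matrix. -/
noncomputable def specNorm {n : ℕ} (A : Matrix (Fin n) (Fin n) ℝ) : ℝ :=
  ‖Matrix.toEuclideanCLM (𝕜 := ℝ) A‖

namespace SosAux

open scoped InnerProductSpace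

/-- Entrywise inner product. -/
noncomputable def ip {n m : ℕ} (A B : Matrix (Fin n) (Fin m) ℝ) : ℝ :=
  ∑ i, ∑ j, A i j * B i j

lemma mip_eq_ip {n : ℕ} (A B : Matrix (Fin n) (Fin n) ℝ) : mip A B = ip A B := by
  simp [mip, ip, Matrix.trace, Matrix.mul_apply, Matrix.diag]

lemma frobSq_eq_ip {n m : ℕ} (A : Matrix (Fin n) (Fin m) ℝ) : frobSq A = ip A A := by
  simp [frobSq, ip, pow_two]

lemma ip_comm {n m : ℕ} (A B : Matrix (Fin n) (Fin m) ℝ) : ip A B = ip B A := by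
  simp [ip, mul_comm]

lemma ip_sub_sub {n m : ℕ} (A B C D : Matrix (Fin n) (Fin m) ℝ) :
    ip (A - B) (C - D) = ip A C - ip A D - ip B C + ip B D := by
  simp only [ip, Matrix.sub_apply, sub_mul, mul_sub, Finset.sum_sub_distrib]
  ring

/-- Abstract Cauchy–Schwarz + Bessel step. -/
lemma abstract_cs {E : Type*} [NormedAddCommGroup E] [InnerProductSpace ℝ E]
    {r m : ℕ} (e : Fin r → E) (he : Orthonormal ℝ e) (u y : Fin m → E)
    (hu : ∀ j, u j = ∑ i, ⟪e i, u j⟫_ℝ • e i) :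
    ∑ j, ⟪u j, y j⟫_ℝ
      ≤ Real.sqrt (∑ i, ∑ j, (⟪e i, y j⟫_ℝ) ^ 2) * Real.sqrt (∑ j, ‖u j‖ ^ 2) := by
  have h1 : ∑ j, ⟪u j, y j⟫_ℝ = ∑ j, ∑ i, ⟪e i, u j⟫_ℝ * ⟪e i, y j⟫_ℝ := by
    refine Finset.sum_congr rfl fun j _ => ?_
    conv_lhs => rw [hu j]
    rw [sum_inner]
    simp [real_inner_smul_left]
  have hcs := Finset.sum_mul_sq_le_sq_mul_sq Finset.univ
      (fun p : Fin r × Fin m => ⟪e p.1, u p.2⟫_ℝ) (fun p : Fin r × Fin m => ⟪e p.1, y p.2⟫_ℝ)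
  have hb : ∀ j, (∑ i, (⟪e i, u j⟫_ℝ) ^ 2) ≤ ‖u j‖ ^ 2 := fun j => by
    simpa [Real.norm_eq_abs, sq_abs] using he.sum_inner_products_le (x := u j)
  have hbessel : (∑ p : Fin r × Fin m, (⟪e p.1, u p.2⟫_ℝ) ^ 2) ≤ ∑ j, ‖u j‖ ^ 2 := by
    rw [Fintype.sum_prod_type_right]
    exact Finset.sum_le_sum fun j _ => hb j
  have hA : (∑ p : Fin r × Fin m, ⟪e p.1, u p.2⟫_ℝ * ⟪e p.1, y p.2⟫_ℝ)
      ≤ Real.sqrt (∑ p : Fin r × Fin m, (⟪e p.1, u p.2⟫_ℝ) ^ 2)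
        * Real.sqrt (∑ p : Fin r × Fin m, (⟪e p.1, y p.2⟫_ℝ) ^ 2) := by
    rw [← Real.sqrt_mul (by positivity)]
    refine le_trans ?_ (Real.sqrt_le_sqrt hcs)
    rw [Real.sqrt_sq_eq_abs]
    exact le_abs_self _
  have h3 : (∑ p : Fin r × Fin m, (⟪e p.1, y p.2⟫_ℝ) ^ 2) = ∑ i, ∑ j, (⟪e i, y j⟫_ℝ) ^ 2 :=
    by rw [Fintype.sum_prod_type]
  calc ∑ j, ⟪u j, y j⟫_ℝ
      = ∑ p : Fin r × Fin m, ⟪e p.1, u p.2⟫_ℝ * ⟪e p.1, y p.2⟫_ℝ := by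
        rw [h1, Fintype.sum_prod_type_right]
    _ ≤ Real.sqrt (∑ p : Fin r × Fin m, (⟪e p.1, u p.2⟫_ℝ) ^ 2)
        * Real.sqrt (∑ p : Fin r × Fin m, (⟪e p.1, y p.2⟫_ℝ) ^ 2) := hA
    _ ≤ Real.sqrt (∑ j, ‖u j‖ ^ 2)
        * Real.sqrt (∑ i, ∑ j, (⟪e i, y j⟫_ℝ) ^ 2) := by
        rw [h3]
        exact mul_le_mul_of_nonneg_right (Real.sqrt_le_sqrt hbessel) (Real.sqrt_nonneg _)
    _ = _ := mul_comm _ _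

set_option maxHeartbeats 1000000 in
open scoped Matrix.Norms.L2Operator in
lemma key {n k : ℕ} (Z Z₀ : Matrix (Fin n) (Fin k) ℝ)
    (B B₀ : Matrix (Fin k) (Fin k) ℝ) (Y : Matrix (Fin n) (Fin n) ℝ) :
    ip (Z * B * Zᵀ - Z₀ * B₀ * Z₀ᵀ) Y
      ≤ 2 * k * (specNorm Y) ^ 2 + (1 / 4) * frobSq (Z * B * Zᵀ - Z₀ * B₀ * Z₀ᵀ) := by
  classical
  set U : Matrix (Fin n) (Fin n) ℝ := Z * B * Zᵀ - Z₀ * B₀ * Z₀ᵀ with hUdef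
  let toE : (Fin n → ℝ) ≃ₗ[ℝ] EuclideanSpace ℝ (Fin n) :=
    (WithLp.linearEquiv 2 ℝ (Fin n → ℝ)).symm
  let col : Matrix (Fin n) (Fin n) ℝ → Fin n → EuclideanSpace ℝ (Fin n) :=
    fun A j => toE (fun i => A i j)
  let v : Fin k ⊕ Fin k → EuclideanSpace ℝ (Fin n) :=
    Sum.elim (fun a => toE (fun i => Z i a)) (fun a => toE (fun i => Z₀ i a))
  set S : Submodule ℝ (EuclideanSpace ℝ (Fin n)) := Submodule.span ℝ (Set.range v) with hS
  have hmem : ∀ j, col U j ∈ S := by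
    intro j
    have h1 : col U j = (∑ a, (B * Zᵀ) a j • v (Sum.inl a))
        - ∑ a, (B₀ * Z₀ᵀ) a j • v (Sum.inr a) := by
      have h2 : (fun i => U i j) = (∑ a, (B * Zᵀ) a j • (fun i => Z i a))
          - ∑ a, (B₀ * Z₀ᵀ) a j • (fun i => Z₀ i a) := by
        funext i
        simp only [hUdef, Matrix.sub_apply, Pi.sub_apply, Finset.sum_apply, Pi.smul_apply,
          smul_eq_mul, Matrix.mul_assoc, Matrix.mul_apply]
        ring_nf
        congr 1 <;> exact Finset.sum_congr rfl fun a _ => by ring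
      simp only [col, v, Sum.elim_inl, Sum.elim_inr, h2, map_sub, map_sum, _root_.map_smul]
    rw [h1]
    exact Submodule.sub_mem _
      (Submodule.sum_smul_mem _ _ fun a _ => Submodule.subset_span ⟨Sum.inl a, rfl⟩)
      (Submodule.sum_smul_mem _ _ fun a _ => Submodule.subset_span ⟨Sum.inr a, rfl⟩)
  set r : ℕ := Module.finrank ℝ S with hrdef
  have hrk : r ≤ 2 * k := by
    have h1 : Module.finrank ℝ S ≤ Fintype.card (Fin k ⊕ Fin k) := by
      rw [hS]
      exact (finrank_span_le_card _).trans
        (by rw [Set.toFinset_card]; exact Fintype.card_range_le v)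
    simpa [two_mul] using h1
  let q : OrthonormalBasis (Fin r) ℝ S := stdOrthonormalBasis ℝ S
  let e : Fin r → EuclideanSpace ℝ (Fin n) := fun i => (q i : EuclideanSpace ℝ (Fin n))
  have he : Orthonormal ℝ e := by
    have := q.orthonormal.comp_linearIsometry S.subtypeₗᵢ
    simpa [Function.comp_def, e] using this
  have hu : ∀ j, col U j = ∑ i, ⟪e i, col U j⟫_ℝ • e i := by
    intro j
    have h0 := q.sum_repr' (⟨col U j, hmem j⟩ : S)
    have h1 := congrArg (Subtype.val) h0
    simp only [AddSubmonoidClass.coe_finset_sum, SetLike.val_smul] at h1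
    rw [show (∑ i, ⟪e i, col U j⟫_ℝ • e i)
        = ∑ i, ⟪q i, (⟨col U j, hmem j⟩ : S)⟫_ℝ • ((q i : EuclideanSpace ℝ (Fin n)))
      from Finset.sum_congr rfl fun i _ => by rw [Submodule.coe_inner]]
    exact h1.symm
  have habs := abstract_cs e he (fun j => col U j) (fun j => col Y j) hu
  have hipUY : ip U Y = ∑ j, ⟪col U j, col Y j⟫_ℝ := by
    rw [ip, Finset.sum_comm]
    refine Finset.sum_congr rfl fun j _ => ?_
    simp [col, toE, PiLp.inner_apply, RCLike.inner_apply, mul_comm]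
  have hfrob : (∑ j, ‖col U j‖ ^ 2) = frobSq U := by
    rw [frobSq, Finset.sum_comm]
    refine Finset.sum_congr rfl fun j _ => ?_
    rw [← real_inner_self_eq_norm_sq]
    simp [col, toE, PiLp.inner_apply, RCLike.inner_apply, pow_two]
    rw [← pow_two, EuclideanSpace.norm_sq_eq]; simp [pow_two]
  set s : ℝ := specNorm Y with hsdef
  have hs0 : 0 ≤ s := norm_nonneg _
  have hy : (∑ i, ∑ j, (⟪e i, col Y j⟫_ℝ) ^ 2) ≤ 2 * k * s ^ 2 := by
    have hone : ∀ i, (∑ j, (⟪e i, col Y j⟫_ℝ) ^ 2) ≤ s ^ 2 := by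
      intro i
      have hconj : Yᴴ = Yᵀ := by
        ext a b
        simp [Matrix.conjTranspose_apply]
      have hsY : s = ‖Y‖ := (Matrix.cstar_norm_def Y).symm
      have hYt : ‖Yᵀ‖ = s := by rw [← hconj, Matrix.l2_opNorm_conjTranspose, hsY]
      have hip : ∀ j, ⟪e i, col Y j⟫_ℝ = ∑ x, e i x * Y x j := by
        intro j
        simp [col, toE, PiLp.inner_apply, RCLike.inner_apply, mul_comm]
      have hwj : ∀ j, (EuclideanSpace.equiv (Fin n) ℝ).symm (Yᵀ *ᵥ e i) j
          = ∑ x, e i x * Y x j := by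
        intro j
        show (Yᵀ *ᵥ (fun x => e i x)) j = _
        rw [Matrix.mulVec, dotProduct]
        exact Finset.sum_congr rfl fun a _ => by
          rw [Matrix.transpose_apply]; ring
      have hnw : ‖(EuclideanSpace.equiv (Fin n) ℝ).symm (Yᵀ *ᵥ e i)‖ ^ 2
          = ∑ j, ((EuclideanSpace.equiv (Fin n) ℝ).symm (Yᵀ *ᵥ e i) j) ^ 2 := by
        rw [← real_inner_self_eq_norm_sq]
        simp [PiLp.inner_apply, RCLike.inner_apply, pow_two]
        rw [← pow_two, EuclideanSpace.norm_sq_eq]; simp [pow_two]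
      have hw : (∑ j, (⟪e i, col Y j⟫_ℝ) ^ 2)
          = ‖(EuclideanSpace.equiv (Fin n) ℝ).symm (Yᵀ *ᵥ e i)‖ ^ 2 := by
        rw [hnw]
        exact Finset.sum_congr rfl fun j _ => by rw [hip j, hwj j]
      have hb : ‖(EuclideanSpace.equiv (Fin n) ℝ).symm (Yᵀ *ᵥ e i)‖ ≤ ‖Yᵀ‖ * ‖e i‖ :=
        Matrix.l2_opNorm_mulVec Yᵀ (e i)
      rw [hYt, he.1 i, mul_one] at hb
      rw [hw]
      have h0 := norm_nonneg ((EuclideanSpace.equiv (Fin n) ℝ).symm (Yᵀ *ᵥ e i))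
      nlinarith
    calc (∑ i, ∑ j, (⟪e i, col Y j⟫_ℝ) ^ 2) ≤ ∑ _i : Fin r, s ^ 2 :=
          Finset.sum_le_sum fun i _ => hone i
      _ = r * s ^ 2 := by simp [Finset.sum_const]
      _ ≤ 2 * k * s ^ 2 := by
          have : (r : ℝ) ≤ 2 * k := by exact_mod_cast hrk
          nlinarith [sq_nonneg s]
  rw [hipUY]
  have hfin : Real.sqrt (∑ i, ∑ j, (⟪e i, col Y j⟫_ℝ) ^ 2) * Real.sqrt (∑ j, ‖col U j‖ ^ 2)
      ≤ 2 * k * s ^ 2 + (1 / 4) * frobSq U := by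
    have hQ : Real.sqrt (∑ i, ∑ j, (⟪e i, col Y j⟫_ℝ) ^ 2) ≤ Real.sqrt (2 * k * s ^ 2) :=
      Real.sqrt_le_sqrt hy
    have h2 : Real.sqrt (∑ j, ‖col U j‖ ^ 2) = Real.sqrt (frobSq U) := by rw [hfrob]
    have hP0 : (0:ℝ) ≤ 2 * k * s ^ 2 := by positivity
    have hF0 : (0:ℝ) ≤ frobSq U := by
      rw [frobSq]; positivity
    have ha := Real.sq_sqrt hP0
    have hb := Real.sq_sqrt hF0
    have h3 : Real.sqrt (2 * k * s ^ 2) * Real.sqrt (frobSq U)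
        ≤ 2 * k * s ^ 2 + (1 / 4) * frobSq U := by
      nlinarith [sq_nonneg (Real.sqrt (2 * k * s ^ 2) - Real.sqrt (frobSq U) / 2),
        Real.sqrt_nonneg (2 * k * s ^ 2), Real.sqrt_nonneg (frobSq U)]
    calc Real.sqrt (∑ i, ∑ j, (⟪e i, col Y j⟫_ℝ) ^ 2) * Real.sqrt (∑ j, ‖col U j‖ ^ 2)
        = Real.sqrt (∑ i, ∑ j, (⟪e i, col Y j⟫_ℝ) ^ 2) * Real.sqrt (frobSq U) := by rw [h2]
      _ ≤ Real.sqrt (2 * k * s ^ 2) * Real.sqrt (frobSq U) :=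
          mul_le_mul_of_nonneg_right hQ (Real.sqrt_nonneg _)
      _ ≤ _ := h3
  exact habs.trans hfin


end SosAux

theorem sos_identifiability_I (n k : ℕ) (Z Z₀ : Matrix (Fin n) (Fin k) ℝ)
    (B B₀ : Matrix (Fin k) (Fin k) ℝ) (Yin : Matrix (Fin n) (Fin n) ℝ)
    (hYin : Yinᵀ = Yin) (hB : Bᵀ = B) :
    frobSq (Z * B * Zᵀ - Z₀ * B₀ * Z₀ᵀ)
      ≤ 8 * k * (specNorm (Yin - Z₀ * B₀ * Z₀ᵀ)) ^ 2
        + 4 * ((mip (Z₀ * B₀ * Z₀ᵀ) Yin - (1 / 2) * frobSq (Z₀ * B₀ * Z₀ᵀ))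
              - (mip (Z * B * Zᵀ) Yin - (1 / 2) * frobSq (Z * B * Zᵀ))) := by
  have hkey := SosAux.key Z Z₀ B B₀ (Yin - Z₀ * B₀ * Z₀ᵀ)
  simp only [SosAux.mip_eq_ip, SosAux.frobSq_eq_ip, SosAux.ip_sub_sub] at hkey ⊢
  linarith [SosAux.ip_comm (Z * B * Zᵀ) (Z₀ * B₀ * Z₀ᵀ)]
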